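/- Let ℏ > 0 and let m, ℓ be natural numbers. Define H̄(x,x',p) = (1/(m+1)) · Σ_{k=0}^{m} x^k · x'^(m−k) · p^ℓ. Then for every Schwartz function ψ : ℝ → ℂ and every real x, the iterated integral (1/(2πℏ)) ∫_ℝ ( ∫_ℝ exp( (i/ℏ)·p·(x − x') ) · H̄(x,x',p) · ψ(x') dx' ) dp (inner integral over x', outer over p) converges and equals (1/(m+1)) · Σ_{k=0}^{m} x^k · (−iℏ)^ℓ · (d/dx)^ℓ ( x^(m−k) · ψ(x) ). -/

import Mathlib

open MeasureTheory Complex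

open scoped FourierTransform Real

namespace BornJordanAux

noncomputable def mulX : SchwartzMap ℝ ℂ →L[ℝ] SchwartzMap ℝ ℂ :=
  SchwartzMap.bilinLeftCLM (ContinuousLinearMap.mul ℝ ℂ)
    Complex.ofRealCLM.hasTemperateGrowth

lemma mulX_apply (f : SchwartzMap ℝ ℂ) (y : ℝ) : mulX f y = f y * (y : ℂ) := rfl

noncomputable def gS (ψ : SchwartzMap ℝ ℂ) : ℕ → SchwartzMap ℝ ℂ
  | 0 => ψ
  | n + 1 => mulX (gS ψ n)

lemma gS_apply (ψ : SchwartzMap ℝ ℂ) (n : ℕ) (y : ℝ) :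
    gS ψ n y = (y : ℂ) ^ n * ψ y := by
  induction n with
  | zero => simp [gS]
  | succ n ih => rw [gS, mulX_apply, ih]; ring

lemma gS_coe (ψ : SchwartzMap ℝ ℂ) (n : ℕ) :
    (fun y : ℝ => (y : ℂ) ^ n * ψ y) = ⇑(gS ψ n) :=
  funext fun y => (gS_apply ψ n y).symm

noncomputable def dS : ℕ → SchwartzMap ℝ ℂ → SchwartzMap ℝ ℂ
  | 0, f => f
  | n + 1, f => SchwartzMap.derivCLM ℝ ℂ (dS n f)

lemma dS_apply (n : ℕ) (f : SchwartzMap ℝ ℂ) : ⇑(dS n f) = iteratedDeriv n ⇑f := by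
  induction n with
  | zero => simp [dS, iteratedDeriv_zero]
  | succ n ih =>
    funext y
    show SchwartzMap.derivCLM ℝ ℂ (dS n f) y = _
    rw [SchwartzMap.derivCLM_apply, ih, iteratedDeriv_succ]

lemma inner_integrable (ℏ : ℝ) (hℏ : ℏ ≠ 0) (g : SchwartzMap ℝ ℂ) (p x : ℝ) :
    Integrable (fun x' : ℝ =>
      Complex.exp ((Complex.I / (ℏ : ℂ)) * (p : ℂ) * ((x : ℂ) - (x' : ℂ))) * g x') := by
  apply g.integrable.bdd_mul (c := 1)
  · exact (Complex.continuous_exp.comp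
      (continuous_const.mul (continuous_const.sub Complex.continuous_ofReal))).aestronglyMeasurable
  · refine Filter.Eventually.of_forall fun x' => ?_
    have h : (Complex.I / (ℏ : ℂ)) * (p : ℂ) * ((x : ℂ) - (x' : ℂ))
        = ((p * (x - x') / ℏ : ℝ) : ℂ) * Complex.I := by
      have hh : (ℏ : ℂ) ≠ 0 := by exact_mod_cast hℏ
      push_cast
      field_simp
    rw [h, Complex.norm_exp_ofReal_mul_I]

lemma inner_integral (ℏ : ℝ) (hℏ : 0 < ℏ) (g : SchwartzMap ℝ ℂ) (p x : ℝ) :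
    (∫ x' : ℝ, Complex.exp ((Complex.I / (ℏ : ℂ)) * (p : ℂ) * ((x : ℂ) - (x' : ℂ))) * g x')
      = Complex.exp (Complex.I * p * x / ℏ) * 𝓕 (⇑g) (p / (2 * π * ℏ)) := by
  have hℏ' : (ℏ : ℂ) ≠ 0 := by exact_mod_cast hℏ.ne'
  have hπ : (π : ℝ) ≠ 0 := Real.pi_ne_zero
  have hπC : (π : ℂ) ≠ 0 := by exact_mod_cast hπ
  have hℏR : ℏ ≠ 0 := hℏ.ne'
  have hR : ∀ x' : ℝ, (-2 * π * x' * (p / (2 * π * ℏ)) : ℝ) = -(x' * p) / ℏ := by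
    intro x'
    field_simp
  rw [Real.fourier_real_eq_integral_exp_smul]
  simp_rw [smul_eq_mul]
  rw [← integral_const_mul]
  congr 1
  funext x'
  rw [← mul_assoc, ← Complex.exp_add, hR x']
  congr 1
  push_cast
  field_simp
  ring

lemma key_inversion (g : SchwartzMap ℝ ℂ) (ℓ : ℕ) (x : ℝ) :
    (∫ ξ : ℝ, Complex.exp (((2 * π * ξ * x : ℝ) : ℂ) * Complex.I) *
        ((2 * π * Complex.I * ξ) ^ ℓ * 𝓕 (⇑g) ξ))
      = iteratedDeriv ℓ (⇑g) x := by
  have hD := Real.fourier_iteratedDeriv (f := ⇑g) (N := (⊤ : ℕ∞)) (n := ℓ)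
    (g.smooth ⊤) (fun n _ => by rw [← dS_apply]; exact (dS n g).integrable) le_top
  have h1 : ∀ ξ : ℝ, (2 * π * Complex.I * (ξ : ℂ)) ^ ℓ * 𝓕 (⇑g) ξ
      = 𝓕 (iteratedDeriv ℓ ⇑g) ξ := by
    intro ξ
    rw [hD]
    simp [smul_eq_mul]
  simp_rw [h1]
  have hDint : Integrable (iteratedDeriv ℓ ⇑g) := by
    rw [← dS_apply]; exact (dS ℓ g).integrable
  have hFD : Integrable (𝓕 (iteratedDeriv ℓ ⇑g)) := by
    rw [← dS_apply]
    have := (SchwartzMap.fourierTransformCLM ℂ (dS ℓ g)).integrable (μ := volume)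
    rwa [SchwartzMap.fourierTransformCLM_apply, SchwartzMap.fourier_coe] at this
  have hcont : ContinuousAt (iteratedDeriv ℓ ⇑g) x := by
    rw [← dS_apply]; exact (dS ℓ g).continuous.continuousAt
  have hinv := hDint.fourierInv_fourier_eq hFD hcont
  rw [← hinv, Real.fourierInv_eq']
  congr 1
  funext ξ
  rw [smul_eq_mul]
  norm_num [RCLike.inner_apply]
  left
  ring_nf

lemma outer_integrable (ℏ : ℝ) (hℏ : 0 < ℏ) (g : SchwartzMap ℝ ℂ) (ℓ : ℕ) (x : ℝ) :
    Integrable (fun p : ℝ => (p : ℂ) ^ ℓ *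
      (Complex.exp (Complex.I * p * x / ℏ) * 𝓕 (⇑g) (p / (2 * π * ℏ)))) := by
  have hπ := Real.pi_pos
  have hc : (0 : ℝ) < 2 * π * ℏ := by positivity
  set G := SchwartzMap.fourierTransformCLM ℂ g with hG
  have hFG : 𝓕 (⇑g) = ⇑G := by
    rw [hG, SchwartzMap.fourierTransformCLM_apply, SchwartzMap.fourier_coe]
  rw [hFG]
  have h1 : Integrable (fun ξ : ℝ => ‖ξ‖ ^ ℓ * ‖G ξ‖) := G.integrable_pow_mul volume ℓ
  have h2 : Integrable (fun p : ℝ => ‖p / (2 * π * ℏ)‖ ^ ℓ * ‖G (p / (2 * π * ℏ))‖) :=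
    h1.comp_div hc.ne'
  refine (h2.const_mul ((2 * π * ℏ) ^ ℓ)).mono' ?_ ?_
  · apply Continuous.aestronglyMeasurable
    refine ((Complex.continuous_ofReal.pow ℓ)).mul (Continuous.mul ?_ ?_)
    · exact Complex.continuous_exp.comp (by fun_prop)
    · exact G.continuous.comp (by fun_prop)
  · filter_upwards with p
    have hexp : ‖Complex.exp (Complex.I * p * x / ℏ)‖ = 1 := by
      have h : Complex.I * (p : ℂ) * (x : ℂ) / (ℏ : ℂ) = ((p * x / ℏ : ℝ) : ℂ) * Complex.I := by
        push_cast; ring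
      rw [h, Complex.norm_exp_ofReal_mul_I]
    rw [norm_mul, norm_mul, hexp, one_mul]
    have : ‖(p : ℂ) ^ ℓ‖ = |p| ^ ℓ := by
      rw [norm_pow, Complex.norm_real, Real.norm_eq_abs]
    rw [this]
    have hnd : ‖p / (2 * π * ℏ)‖ ^ ℓ = |p| ^ ℓ / (2 * π * ℏ) ^ ℓ := by
      rw [Real.norm_eq_abs, abs_div, abs_of_pos hc, div_pow]
    rw [hnd]
    refine le_of_eq ?_
    field_simp

lemma outer_integral (ℏ : ℝ) (hℏ : 0 < ℏ) (g : SchwartzMap ℝ ℂ) (ℓ : ℕ) (x : ℝ) :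
    (∫ p : ℝ, (p : ℂ) ^ ℓ *
        (Complex.exp (Complex.I * p * x / ℏ) * 𝓕 (⇑g) (p / (2 * π * ℏ))))
      = ((2 * π * ℏ : ℝ) : ℂ) * (-Complex.I * ℏ) ^ ℓ * iteratedDeriv ℓ (⇑g) x := by
  have hπ := Real.pi_pos
  have hc : (0 : ℝ) < 2 * π * ℏ := by positivity
  set f : ℝ → ℂ := fun p : ℝ => (p : ℂ) ^ ℓ *
    (Complex.exp (Complex.I * p * x / ℏ) * 𝓕 (⇑g) (p / (2 * π * ℏ))) with hf
  have hcv := MeasureTheory.Measure.integral_comp_mul_left f (2 * π * ℏ)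
  have hinteq : (fun ξ : ℝ => f ((2 * π * ℏ) * ξ))
      = fun ξ : ℝ => (-Complex.I * ℏ) ^ ℓ *
          (Complex.exp (((2 * π * ξ * x : ℝ) : ℂ) * Complex.I) *
            ((2 * π * Complex.I * ξ) ^ ℓ * 𝓕 (⇑g) ξ)) := by
    funext ξ
    simp only [hf]
    have harg : ((2 * π * ℏ) * ξ) / (2 * π * ℏ) = ξ := by field_simp
    rw [harg]
    have hexp : Complex.I * (((2 * π * ℏ) * ξ : ℝ) : ℂ) * x / ℏ
        = ((2 * π * ξ * x : ℝ) : ℂ) * Complex.I := by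
      have : (ℏ : ℂ) ≠ 0 := by exact_mod_cast hℏ.ne'
      field_simp
      push_cast
      ring
    rw [hexp]
    have hpow : ((((2 * π * ℏ) * ξ : ℝ)) : ℂ) ^ ℓ
        = (-Complex.I * ℏ) ^ ℓ * (2 * π * Complex.I * ξ) ^ ℓ := by
      rw [← mul_pow]
      congr 1
      push_cast
      linear_combination (2 * (π : ℂ) * (ℏ : ℂ) * (ξ : ℂ)) * Complex.I_mul_I
    rw [hpow]
    ring
  rw [hinteq] at hcv
  rw [integral_const_mul, key_inversion] at hcv
  have habs : |(2 * π * ℏ)⁻¹| = (2 * π * ℏ)⁻¹ := abs_of_pos (by positivity)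
  rw [habs] at hcv
  have : ∫ p : ℝ, f p = (2 * π * ℏ) • ((2 * π * ℏ)⁻¹ • ∫ p : ℝ, f p) := by
    rw [smul_smul, mul_inv_cancel₀ hc.ne', one_smul]
  rw [this, ← hcv, Complex.real_smul]
  push_cast
  ring

end BornJordanAux

open BornJordanAux

theorem born_jordan_monomial_quantization (ℏ : ℝ) (hℏ : 0 < ℏ) (m ℓ : ℕ)
    (Hbar : ℝ → ℝ → ℝ → ℂ)
    (hHbar : ∀ x x' p, Hbar x x' p
      = (1 / ((m : ℂ) + 1)) *
        ∑ k ∈ Finset.range (m + 1), (x : ℂ) ^ k * (x' : ℂ) ^ (m - k) * (p : ℂ) ^ ℓ)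
    (ψ : SchwartzMap ℝ ℂ) (x : ℝ) :
    (∀ p : ℝ, Integrable (fun x' : ℝ =>
        Complex.exp ((Complex.I / (ℏ : ℂ)) * (p : ℂ) * ((x : ℂ) - (x' : ℂ))) * Hbar x x' p * ψ x')) ∧
    Integrable (fun p : ℝ => ∫ x' : ℝ,
        Complex.exp ((Complex.I / (ℏ : ℂ)) * (p : ℂ) * ((x : ℂ) - (x' : ℂ))) * Hbar x x' p * ψ x') ∧
    (1 / (2 * Real.pi * ℏ) : ℂ) *
        ∫ p : ℝ, ∫ x' : ℝ,
          Complex.exp ((Complex.I / (ℏ : ℂ)) * (p : ℂ) * ((x : ℂ) - (x' : ℂ))) * Hbar x x' p * ψ x'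
      = (1 / ((m : ℂ) + 1)) *
          ∑ k ∈ Finset.range (m + 1),
            (x : ℂ) ^ k * (-Complex.I * (ℏ : ℂ)) ^ ℓ *
              iteratedDeriv ℓ (fun y : ℝ => (y : ℂ) ^ (m - k) * ψ y) x := by
  have hπ := Real.pi_pos
  have hℏ' : ℏ ≠ 0 := hℏ.ne'
  have hfun : ∀ p : ℝ, (fun x' : ℝ =>
      Complex.exp ((Complex.I / (ℏ : ℂ)) * (p : ℂ) * ((x : ℂ) - (x' : ℂ))) * Hbar x x' p * ψ x')
      = fun x' : ℝ => ∑ k ∈ Finset.range (m + 1),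
          ((1 / ((m : ℂ) + 1)) * (x : ℂ) ^ k * (p : ℂ) ^ ℓ) *
            (Complex.exp ((Complex.I / (ℏ : ℂ)) * (p : ℂ) * ((x : ℂ) - (x' : ℂ)))
              * gS ψ (m - k) x') := by
    intro p
    funext x'
    rw [hHbar, Finset.mul_sum, Finset.mul_sum, Finset.sum_mul]
    refine Finset.sum_congr rfl fun k _ => ?_
    rw [gS_apply]
    ring
  have part1 : ∀ p : ℝ, Integrable (fun x' : ℝ =>
      Complex.exp ((Complex.I / (ℏ : ℂ)) * (p : ℂ) * ((x : ℂ) - (x' : ℂ))) * Hbar x x' p * ψ x') := by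
    intro p
    rw [hfun p]
    exact integrable_finset_sum _ fun k _ =>
      (inner_integrable ℏ hℏ' (gS ψ (m - k)) p x).const_mul _
  have hval : ∀ p : ℝ, (∫ x' : ℝ,
      Complex.exp ((Complex.I / (ℏ : ℂ)) * (p : ℂ) * ((x : ℂ) - (x' : ℂ))) * Hbar x x' p * ψ x')
      = ∑ k ∈ Finset.range (m + 1), ((1 / ((m : ℂ) + 1)) * (x : ℂ) ^ k) *
          ((p : ℂ) ^ ℓ * (Complex.exp (Complex.I * p * x / ℏ) *
            𝓕 (⇑(gS ψ (m - k))) (p / (2 * π * ℏ)))) := by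
    intro p
    rw [hfun p, integral_finset_sum _ fun k _ =>
      (inner_integrable ℏ hℏ' (gS ψ (m - k)) p x).const_mul _]
    refine Finset.sum_congr rfl fun k _ => ?_
    rw [integral_const_mul, inner_integral ℏ hℏ (gS ψ (m - k)) p x]
    ring
  refine ⟨part1, ?_, ?_⟩
  · rw [show (fun p : ℝ => ∫ x' : ℝ,
        Complex.exp ((Complex.I / (ℏ : ℂ)) * (p : ℂ) * ((x : ℂ) - (x' : ℂ))) * Hbar x x' p * ψ x')
        = fun p : ℝ => ∑ k ∈ Finset.range (m + 1), ((1 / ((m : ℂ) + 1)) * (x : ℂ) ^ k) *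
          ((p : ℂ) ^ ℓ * (Complex.exp (Complex.I * p * x / ℏ) *
            𝓕 (⇑(gS ψ (m - k))) (p / (2 * π * ℏ)))) from funext hval]
    exact integrable_finset_sum _ fun k _ =>
      (outer_integrable ℏ hℏ (gS ψ (m - k)) ℓ x).const_mul _
  · simp_rw [hval]
    rw [integral_finset_sum _ fun k _ =>
      (outer_integrable ℏ hℏ (gS ψ (m - k)) ℓ x).const_mul _]
    simp_rw [integral_const_mul, outer_integral ℏ hℏ _ ℓ x]
    rw [Finset.mul_sum, Finset.mul_sum]
    refine Finset.sum_congr rfl fun k _ => ?_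
    rw [gS_coe ψ (m - k)]
    have hπC : ((π : ℝ) : ℂ) ≠ 0 := by exact_mod_cast Real.pi_ne_zero
    have hℏC : ((ℏ : ℝ) : ℂ) ≠ 0 := by exact_mod_cast hℏ'
    have hm : ((m : ℂ) + 1) ≠ 0 := Nat.cast_add_one_ne_zero m
    push_cast
    field_simp
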